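/- arXiv:0912.4978 — 2 statements merged into one kernel-verified Lean document; each statement's English description precedes it below -/
import Mathlib

section
/- Let D be a finite homomorphism-homogeneous reflexive bidirectionally disconnected improper digraph with no back-and-forth. Then for all distinct θ(D)-classes S, T: either there is no edge between S and T in either direction, or every vertex of S has an edge to every vertex of T, or every vertex of T has an edge to every vertex of S. -/
/-- A digraph `(V, E)` is homomorphism-homogeneous if every homomorphism between finitely
induced subdigraphs extends to an endomorphism. -/
def IsHomHom {V : Type*} (E : V → V → Prop) : Prop :=
  ∀ (U : Set V) (f : V → V), U.Finite →
    (∀ x ∈ U, ∀ y ∈ U, E x y → E (f x) (f y)) →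
    ∃ g : V → V, (∀ x y, E x y → E (g x) (g y)) ∧ ∀ x ∈ U, g x = f x

/-- The bidirectional connectedness relation `θ(D)`: the equivalence closure of the
double-edge relation `⇄`. -/
def Theta {V : Type*} (E : V → V → Prop) : V → V → Prop :=
  Relation.EqvGen (fun a b => E a b ∧ E b a)

/-- `E` is improper: neither symmetric nor antisymmetric. -/
def Improper {V : Type*} (E : V → V → Prop) : Prop :=
  (∃ x y, x ≠ y ∧ E x y ∧ E y x) ∧ (∃ x y, E x y ∧ ¬ E y x)

/-- `D` is bidirectionally disconnected: there is an edge between two distinct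
`θ(D)`-classes. -/
def BidirDisconnected {V : Type*} (E : V → V → Prop) : Prop :=
  ∃ x y, ¬ Theta E x y ∧ E x y

/-- Endomorphisms preserve `Theta`. -/
lemma theta_map {V : Type*} {E : V → V → Prop} {g : V → V}
    (hg : ∀ a b, E a b → E (g a) (g b)) :
    ∀ {a b}, Theta E a b → Theta E (g a) (g b) := by
  intro a b h
  induction h with
  | rel a b h => exact Relation.EqvGen.rel _ _ ⟨hg _ _ h.1, hg _ _ h.2⟩
  | refl a => exact Relation.EqvGen.refl _
  | symm a b _ ih => exact Relation.EqvGen.symm _ _ ih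
  | trans a b c _ _ ih1 ih2 => exact Relation.EqvGen.trans _ _ _ ih1 ih2

/-- If there is some edge from the class of `x` to the class of `y` (distinct classes),
then every vertex of the class of `x` has an edge to every vertex of the class of `y`. -/
lemma aux_full {V : Type*} (E : V → V → Prop)
    (hrefl : ∀ x, E x x)
    (hnbf : ∀ x y, (∃ s t, Theta E s x ∧ Theta E t y ∧ E s t) →
      (∃ s t, Theta E s x ∧ Theta E t y ∧ E t s) → Theta E x y)
    (hhh : IsHomHom E) (x y : V) (hxy : ¬ Theta E x y)
    (hedge : ∃ s t, Theta E s x ∧ Theta E t y ∧ E s t) :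
    ∀ s t, Theta E s x → Theta E t y → E s t := by
  classical
  intro s' t' hs' ht'
  by_contra hst
  -- no reverse edge t' → s'
  have hts : ¬ E t' s' := fun h => hxy (hnbf x y hedge ⟨s', t', hs', ht', h⟩)
  have hne : s' ≠ t' := by
    rintro rfl
    exact hxy (Relation.EqvGen.trans _ _ _ (Relation.EqvGen.symm _ _ hs') ht')
  -- the swap of s' and t' is a homomorphism of the induced subdigraph on {s', t'}
  set f : V → V := fun v => if v = s' then t' else if v = t' then s' else v with hf
  have hfs : f s' = t' := by simp [hf]
  have hft : f t' = s' := by simp [hf, hne.symm]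
  obtain ⟨g, hg, hgU⟩ := hhh {s', t'} f ((Set.finite_singleton t').insert s')
    (by
      intro a ha b hb hab
      rcases ha with rfl | ha <;> rcases hb with rfl | hb
      · rw [hfs]; exact hrefl _
      · rw [Set.mem_singleton_iff] at hb; subst hb
        exact absurd hab hst
      · rw [Set.mem_singleton_iff] at ha; subst ha
        exact absurd hab hts
      · rw [Set.mem_singleton_iff] at ha hb; subst ha; subst hb
        rw [hft]; exact hrefl _)
  have hgs : g s' = t' := by rw [hgU s' (Set.mem_insert _ _), hfs]
  have hgt : g t' = s' := by rw [hgU t' (Set.mem_insert_of_mem _ rfl), hft]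
  obtain ⟨s, t, hs, ht, hst0⟩ := hedge
  -- g maps the class of x into the class of y and vice versa
  have hθs : Theta E (g s) y := by
    have h1 : Theta E s s' :=
      Relation.EqvGen.trans _ _ _ hs (Relation.EqvGen.symm _ _ hs')
    have h2 := theta_map hg h1
    rw [hgs] at h2
    exact Relation.EqvGen.trans _ _ _ h2 ht'
  have hθt : Theta E (g t) x := by
    have h1 : Theta E t t' :=
      Relation.EqvGen.trans _ _ _ ht (Relation.EqvGen.symm _ _ ht')
    have h2 := theta_map hg h1
    rw [hgt] at h2
    exact Relation.EqvGen.trans _ _ _ h2 hs'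
  -- the image of the edge s → t is an edge from the class of y to the class of x
  exact hxy (hnbf x y ⟨s, t, hs, ht, hst0⟩ ⟨g t, g s, hθt, hθs, hg _ _ hst0⟩)

/-- Let `D` be a finite homomorphism-homogeneous reflexive bidirectionally
disconnected improper digraph with no back-and-forth. Then for all distinct
`θ(D)`-classes `S = [x]`, `T = [y]`: either there are no edges between `S` and `T`, or
`S ⇉ T`, or `T ⇉ S`. -/
theorem stmt_14 {V : Type*} [Fintype V] (E : V → V → Prop)
    (hrefl : ∀ x, E x x) (himp : Improper E) (hbd : BidirDisconnected E)
    (hnbf : ∀ x y, (∃ s t, Theta E s x ∧ Theta E t y ∧ E s t) →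
      (∃ s t, Theta E s x ∧ Theta E t y ∧ E t s) → Theta E x y)
    (hhh : IsHomHom E) :
    ∀ x y, ¬ Theta E x y →
      (∀ s t, Theta E s x → Theta E t y → ¬ E s t ∧ ¬ E t s) ∨
      (∀ s t, Theta E s x → Theta E t y → E s t) ∨
      (∀ s t, Theta E s x → Theta E t y → E t s) := by
  intro x y hxy
  have hyx : ¬ Theta E y x := fun h => hxy (Relation.EqvGen.symm _ _ h)
  by_cases h1 : ∃ s t, Theta E s x ∧ Theta E t y ∧ E s t
  · exact Or.inr (Or.inl (aux_full E hrefl hnbf hhh x y hxy h1))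
  · by_cases h2 : ∃ s t, Theta E s y ∧ Theta E t x ∧ E s t
    · refine Or.inr (Or.inr ?_)
      intro s t hs ht
      exact aux_full E hrefl hnbf hhh y x hyx h2 t s ht hs
    · refine Or.inl ?_
      intro s t hs ht
      exact ⟨fun h => h1 ⟨s, t, hs, ht, h⟩, fun h => h2 ⟨t, s, ht, hs, h⟩⟩
end

section
/- Let D be a finite homomorphism-homogeneous reflexive improper bidirectionally disconnected digraph, and let S, T be distinct θ(D)-classes with S ⇄ T. With γ_T(S) defined by (x,y) ∈ γ_T(S) iff no t ∈ T satisfies x → t → y or y → t → x, the following are equivalent for x, y ∈ S: (i) (x,y) ∈ γ_T(S); (ii) for all t ∈ T, (x → t and y → t) or (t → x and t → y); (iii) there exists t ∈ T with (x → t and y → t) or (t → x and t → y). -/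
section Aux

variable {V : Type*}

private lemma theta_symm {E : V → V → Prop} {a b : V} (h : Theta E a b) : Theta E b a :=
  Relation.EqvGen.symm a b h

private lemma theta_trans {E : V → V → Prop} {a b c : V} (h1 : Theta E a b)
    (h2 : Theta E b c) : Theta E a c :=
  Relation.EqvGen.trans a b c h1 h2

private lemma theta_flip {E : V → V → Prop} {a b : V}
    (h : Theta (fun p q => E q p) a b) : Theta E a b :=
  Relation.EqvGen.mono (r := fun a b => E b a ∧ E a b) (p := fun a b => E a b ∧ E b a)
    (fun _ _ hpq => ⟨hpq.2, hpq.1⟩) a b h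

private lemma flip_theta {E : V → V → Prop} {a b : V}
    (h : Theta E a b) : Theta (fun p q => E q p) a b :=
  Relation.EqvGen.mono (r := fun a b => E a b ∧ E b a) (p := fun a b => E b a ∧ E a b)
    (fun _ _ hpq => ⟨hpq.2, hpq.1⟩) a b h

private lemma homhom_flip {E : V → V → Prop} (hhh : IsHomHom E) :
    IsHomHom (fun p q => E q p) := by
  intro U f hU hf
  obtain ⟨g, hg, hgU⟩ := hhh U f hU (fun x hx y hy hxy => hf y hy x hx hxy)
  exact ⟨g, fun x y hxy => hg y x hxy, hgU⟩

private lemma endo_theta {E : V → V → Prop} {g : V → V}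
    (hg : ∀ x y, E x y → E (g x) (g y)) {a b : V} (h : Theta E a b) :
    Theta E (g a) (g b) := by
  induction h with
  | rel p q hpq => exact Relation.EqvGen.rel _ _ ⟨hg _ _ hpq.1, hg _ _ hpq.2⟩
  | refl p => exact Relation.EqvGen.refl _
  | symm p q _ ih => exact Relation.EqvGen.symm _ _ ih
  | trans p q r _ _ ih1 ih2 => exact Relation.EqvGen.trans _ _ _ ih1 ih2

/-- The key tool: collapsing `t` onto `u` while fixing `x`. -/
private lemma tool [Fintype V] {E : V → V → Prop} (hrefl : ∀ x, E x x)
    (hhh : IsHomHom E) {x y t u : V} (hxt : x ≠ t)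
    (h1 : E x t → E x u) (h2 : E t x → E u x)
    (h3 : E y t) (h4 : E u y) (h5 : Theta E x y) : Theta E x u := by
  classical
  set f : V → V := fun v => if v = t then u else v with hf
  have hfx : f x = x := by simp [hf, hxt]
  have hft : f t = u := by simp [hf]
  have hfu : f u = u := by simp [hf]
  have hom : ∀ a ∈ ({x, t, u} : Set V), ∀ b ∈ ({x, t, u} : Set V),
      E a b → E (f a) (f b) := by
    intro a ha b hb hab
    simp only [Set.mem_insert_iff, Set.mem_singleton_iff] at ha hb
    have hfc : ∀ c : V, c ≠ t → f c = c := fun c hc => by simp [hf, hc]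
    by_cases hat : a = t <;> by_cases hbt : b = t
    · rw [hat, hbt, hft]; exact hrefl u
    · rw [hat, hft]
      rw [hat] at hab
      rcases hb with hb | hb | hb
      · rw [hb] at hab ⊢; rw [hfx]; exact h2 hab
      · exact absurd hb hbt
      · rw [hb, hfu]; exact hrefl u
    · rw [hbt, hft]
      rw [hbt] at hab
      rcases ha with ha | ha | ha
      · rw [ha] at hab ⊢; rw [hfx]; exact h1 hab
      · exact absurd ha hat
      · rw [ha, hfu]; exact hrefl u
    · rw [hfc a hat, hfc b hbt]; exact hab
  obtain ⟨g, hg, hgU⟩ := hhh {x, t, u} f (Set.toFinite _) hom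
  have hgx : g x = x := by rw [hgU x (by simp), hfx]
  have hgt : g t = u := by rw [hgU t (by simp), hft]
  have hgu : g u = u := by rw [hgU u (by simp), hfu]
  have e1 : E (g y) u := by have := hg y t h3; rwa [hgt] at this
  have e2 : E u (g y) := by have := hg u y h4; rwa [hgu] at this
  have h6 : Theta E x (g y) := by
    have := endo_theta hg h5; rwa [hgx] at this
  exact theta_trans h6 (Relation.EqvGen.rel _ _ ⟨e1, e2⟩)

/-- One-step non-adjacency lemma: if `p → q`, `p ⇄ p'` and `p'` is not adjacent
to `q`, then `p` and `q` are θ-equivalent. -/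
private lemma step [Fintype V] {E : V → V → Prop} (hrefl : ∀ x, E x x)
    (hhh : IsHomHom E) {p p' q : V} (hpq : E p q) (h1 : E p p') (h2 : E p' p)
    (h3 : ¬ E p' q) (h4 : ¬ E q p') : Theta E p q := by
  classical
  have hne : p' ≠ q := by intro h; rw [h] at h3; exact h3 (hrefl q)
  set f : V → V := fun v => if v = p' then q else if v = q then p else v with hf
  have hfp' : f p' = q := by simp [hf]
  have hfq : f q = p := by simp [hf, hne.symm]
  have hom : ∀ a ∈ ({p', q} : Set V), ∀ b ∈ ({p', q} : Set V),
      E a b → E (f a) (f b) := by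
    intro a ha b hb hab
    simp only [Set.mem_insert_iff, Set.mem_singleton_iff] at ha hb
    rcases ha with ha | ha <;> rcases hb with hb | hb
    · rw [ha, hb, hfp']; exact hrefl q
    · rw [ha, hb] at hab; exact absurd hab h3
    · rw [ha, hb] at hab; exact absurd hab h4
    · rw [ha, hb, hfq]; exact hrefl p
  obtain ⟨g, hg, hgU⟩ := hhh {p', q} f (Set.toFinite _) hom
  have hgp' : g p' = q := by rw [hgU p' (by simp), hfp']
  have hgq : g q = p := by rw [hgU q (by simp), hfq]
  have ewq : E (g p) q := by have := hg p p' h1; rwa [hgp'] at this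
  have eqw : E q (g p) := by have := hg p' p h2; rwa [hgp'] at this
  have ewp : E (g p) p := by have := hg p q hpq; rwa [hgq] at this
  have htool : Theta E p' (g p) :=
    tool hrefl hhh hne (fun h => absurd h h3) (fun h => absurd h h4) hpq ewp
      (Relation.EqvGen.rel _ _ ⟨h2, h1⟩)
  exact theta_trans (Relation.EqvGen.rel _ _ ⟨h1, h2⟩)
    (theta_trans htool (Relation.EqvGen.rel _ _ ⟨ewq, eqw⟩))

end Aux

section Aux2

variable {V : Type*} [Fintype V]

/-- Fact A: any `s ∈ S` and `t ∈ T` are adjacent in at least one direction. -/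
private lemma factA {E : V → V → Prop} (hrefl : ∀ x, E x x) (hhh : IsHomHom E)
    {x₀ y₀ : V} (hxy : ¬ Theta E x₀ y₀)
    (hST : ∃ s t, Theta E s x₀ ∧ Theta E t y₀ ∧ E s t) :
    ∀ s t, Theta E s x₀ → Theta E t y₀ → E s t ∨ E t s := by
  classical
  have hhh' : IsHomHom (fun p q => E q p) := homhom_flip hhh
  have hrefl' : ∀ x, (fun p q => E q p) x x := hrefl
  -- one-step adjacency transfer on the S side
  have adj_src : ∀ p p' q : V, (E p q ∨ E q p) → E p p' → E p' p →
      Theta E p x₀ → Theta E q y₀ → E p' q ∨ E q p' := by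
    intro p p' q hadj e1 e2 hp hq
    by_cases hs : E p' q ∨ E q p'
    · exact hs
    push_neg at hs
    exfalso
    rcases hadj with hpq | hqp
    · exact hxy (theta_trans (theta_symm hp)
        (theta_trans (step hrefl hhh hpq e1 e2 hs.1 hs.2) hq))
    · have : Theta (fun p q => E q p) p q :=
        step (E := fun p q => E q p) hrefl' hhh' (p := p) (p' := p') (q := q) hqp e2 e1 hs.2 hs.1
      exact hxy (theta_trans (theta_symm hp) (theta_trans (theta_flip this) hq))
  -- one-step adjacency transfer on the T side
  have adj_tgt : ∀ p q q' : V, (E p q ∨ E q p) → E q q' → E q' q →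
      Theta E p x₀ → Theta E q y₀ → E p q' ∨ E q' p := by
    intro p q q' hadj e1 e2 hp hq
    by_cases hs : E p q' ∨ E q' p
    · exact hs
    push_neg at hs
    exfalso
    rcases hadj with hpq | hqp
    · have : Theta (fun p q => E q p) q p :=
        step (E := fun p q => E q p) hrefl' hhh' (p := q) (p' := q') (q := p) hpq e2 e1 hs.1 hs.2
      exact hxy (theta_trans (theta_symm hp)
        (theta_trans (theta_symm (theta_flip this)) hq))
    · exact hxy (theta_trans (theta_symm hp)
        (theta_trans (theta_symm (step hrefl hhh hqp e1 e2 hs.2 hs.1)) hq))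
  obtain ⟨s₀, t₀, hs₀, ht₀, he₀⟩ := hST
  intro s t hs ht
  -- first, adjacency of s with t₀
  have key1 : ∀ a b : V, Relation.EqvGen (fun a b => E a b ∧ E b a) a b →
      ((Theta E a x₀ ∧ (E a t₀ ∨ E t₀ a)) ↔ (Theta E b x₀ ∧ (E b t₀ ∨ E t₀ b))) := by
    intro a b h
    induction h with
    | rel a b hab =>
      constructor
      · rintro ⟨ha, hadj⟩
        have hb : Theta E b x₀ :=
          theta_trans (theta_symm (Relation.EqvGen.rel a b hab)) ha
        exact ⟨hb, adj_src a b t₀ hadj hab.1 hab.2 ha ht₀⟩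
      · rintro ⟨hb, hadj⟩
        have ha : Theta E a x₀ := theta_trans (Relation.EqvGen.rel a b hab) hb
        exact ⟨ha, adj_src b a t₀ hadj hab.2 hab.1 hb ht₀⟩
    | refl a => exact Iff.rfl
    | symm a b _ ih => exact ih.symm
    | trans a b c _ _ ih1 ih2 => exact ih1.trans ih2
  have hss₀ : Theta E s s₀ := theta_trans hs (theta_symm hs₀)
  have adj1 : E s t₀ ∨ E t₀ s := ((key1 s s₀ hss₀).mpr ⟨hs₀, Or.inl he₀⟩).2
  -- then move t₀ to t
  have key2 : ∀ a b : V, Relation.EqvGen (fun a b => E a b ∧ E b a) a b →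
      ((Theta E a y₀ ∧ (E s a ∨ E a s)) ↔ (Theta E b y₀ ∧ (E s b ∨ E b s))) := by
    intro a b h
    induction h with
    | rel a b hab =>
      constructor
      · rintro ⟨ha, hadj⟩
        have hb : Theta E b y₀ :=
          theta_trans (theta_symm (Relation.EqvGen.rel a b hab)) ha
        exact ⟨hb, adj_tgt s a b hadj hab.1 hab.2 hs ha⟩
      · rintro ⟨hb, hadj⟩
        have ha : Theta E a y₀ := theta_trans (Relation.EqvGen.rel a b hab) hb
        exact ⟨ha, adj_tgt s b a hadj hab.2 hab.1 hs hb⟩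
    | refl a => exact Iff.rfl
    | symm a b _ ih => exact ih.symm
    | trans a b c _ _ ih1 ih2 => exact ih1.trans ih2
  have htt₀ : Theta E t t₀ := theta_trans ht (theta_symm ht₀)
  exact ((key2 t t₀ htt₀).mpr ⟨ht₀, adj1⟩).2

end Aux2

/-- With `S = [x₀]`, `T = [y₀]` distinct `θ(D)`-classes with edges in both
directions in a finite homomorphism-homogeneous reflexive improper bidirectionally
disconnected digraph, for `x, y ∈ S` the following are equivalent:
(i) `(x,y) ∈ γ_T(S)` (no `t ∈ T` with `x → t → y` or `y → t → x`);
(ii) for all `t ∈ T`, (`x → t` and `y → t`) or (`t → x` and `t → y`);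
(iii) for some `t ∈ T`, (`x → t` and `y → t`) or (`t → x` and `t → y`). -/
theorem stmt_17 {V : Type*} [Fintype V] (E : V → V → Prop)
    (hrefl : ∀ x, E x x) (himp : Improper E) (hbd : BidirDisconnected E)
    (hhh : IsHomHom E)
    (x₀ y₀ : V) (hxy : ¬ Theta E x₀ y₀)
    (hST : ∃ s t, Theta E s x₀ ∧ Theta E t y₀ ∧ E s t)
    (hTS : ∃ s t, Theta E s x₀ ∧ Theta E t y₀ ∧ E t s) :
    ∀ x y, Theta E x x₀ → Theta E y x₀ →
      ((¬ ∃ t, Theta E t y₀ ∧ ((E x t ∧ E t y) ∨ (E y t ∧ E t x))) ↔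
        (∀ t, Theta E t y₀ → (E x t ∧ E y t) ∨ (E t x ∧ E t y))) ∧
      ((¬ ∃ t, Theta E t y₀ ∧ ((E x t ∧ E t y) ∨ (E y t ∧ E t x))) ↔
        (∃ t, Theta E t y₀ ∧ ((E x t ∧ E y t) ∨ (E t x ∧ E t y)))) := by
  
  intro x y hx hy
  have notTheta : ∀ {a b : V}, Theta E a x₀ → Theta E b y₀ → Theta E a b → False :=
    fun ha hb hab => hxy (theta_trans (theta_symm ha) (theta_trans hab hb))
  have hB : ∀ {a b : V}, Theta E a x₀ → Theta E b y₀ → E a b → E b a → False :=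
    fun ha hb e1 e2 => notTheta ha hb (Relation.EqvGen.rel _ _ ⟨e1, e2⟩)
  have hneq : ∀ {a b : V}, Theta E a x₀ → Theta E b y₀ → a ≠ b := by
    intro a b ha hb h
    subst h
    exact notTheta ha hb (Relation.EqvGen.refl a)
  have adj := factA hrefl hhh hxy hST
  have hhh' : IsHomHom (fun p q => E q p) := homhom_flip hhh
  have hrefl' : ∀ v : V, (fun p q => E q p) v v := hrefl
  -- (i) → (ii)
  have hi2ii : (¬ ∃ t, Theta E t y₀ ∧ ((E x t ∧ E t y) ∨ (E y t ∧ E t x))) →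
      (∀ t, Theta E t y₀ → (E x t ∧ E y t) ∨ (E t x ∧ E t y)) := by
    intro hi t ht
    rcases adj x t hx ht with hxt | htx
    · rcases adj y t hy ht with hyt | hty
      · exact Or.inl ⟨hxt, hyt⟩
      · exact (hi ⟨t, ht, Or.inl ⟨hxt, hty⟩⟩).elim
    · rcases adj y t hy ht with hyt | hty
      · exact (hi ⟨t, ht, Or.inr ⟨hyt, htx⟩⟩).elim
      · exact Or.inr ⟨htx, hty⟩
  -- (ii) → (i)
  have hii2i : (∀ t, Theta E t y₀ → (E x t ∧ E y t) ∨ (E t x ∧ E t y)) →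
      (¬ ∃ t, Theta E t y₀ ∧ ((E x t ∧ E t y) ∨ (E y t ∧ E t x))) := by
    intro hii
    rintro ⟨t, ht, hc⟩
    rcases hii t ht with ⟨hxt', hyt'⟩ | ⟨htx', hty'⟩
    · rcases hc with ⟨hxt, hty⟩ | ⟨hyt, htx⟩
      · exact hB hy ht hyt' hty
      · exact hB hx ht hxt' htx
    · rcases hc with ⟨hxt, hty⟩ | ⟨hyt, htx⟩
      · exact hB hx ht hxt htx'
      · exact hB hy ht hyt hty'
  -- (ii) → (iii)
  have hii2iii : (∀ t, Theta E t y₀ → (E x t ∧ E y t) ∨ (E t x ∧ E t y)) →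
      (∃ t, Theta E t y₀ ∧ ((E x t ∧ E y t) ∨ (E t x ∧ E t y))) :=
    fun hii => ⟨y₀, Relation.EqvGen.refl y₀, hii y₀ (Relation.EqvGen.refl y₀)⟩
  -- (iii) → (i)
  have hiii2i : (∃ t, Theta E t y₀ ∧ ((E x t ∧ E y t) ∨ (E t x ∧ E t y))) →
      (¬ ∃ t, Theta E t y₀ ∧ ((E x t ∧ E t y) ∨ (E y t ∧ E t x))) := by
    rintro ⟨t, ht, hpat⟩ ⟨u, hu, hbad⟩
    have hxyt : Theta E x y := theta_trans hx (theta_symm hy)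
    rcases hpat with ⟨hxt, hyt⟩ | ⟨htx, hty⟩
    · rcases hbad with ⟨hxu, huy⟩ | ⟨hyu, hux⟩
      · exact notTheta hx hu
          (tool hrefl hhh (hneq hx ht) (fun _ => hxu)
            (fun h => (hB hx ht hxt h).elim) hyt huy hxyt)
      · exact notTheta hy hu
          (tool hrefl hhh (hneq hy ht) (fun _ => hyu)
            (fun h => (hB hy ht hyt h).elim) hxt hux (theta_symm hxyt))
    · rcases hbad with ⟨hxu, huy⟩ | ⟨hyu, hux⟩
      · have := tool (E := fun p q => E q p) hrefl' hhh' (x := y) (y := x)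
          (t := t) (u := u) (hneq hy ht) (fun _ => huy)
          (fun h => (hB hy ht h hty).elim) htx hxu (flip_theta (theta_symm hxyt))
        exact notTheta hy hu (theta_flip this)
      · have := tool (E := fun p q => E q p) hrefl' hhh' (x := x) (y := y)
          (t := t) (u := u) (hneq hx ht) (fun _ => hux)
          (fun h => (hB hx ht h htx).elim) hty hyu (flip_theta hxyt)
        exact notTheta hx hu (theta_flip this)
  exact ⟨⟨hi2ii, hii2i⟩, ⟨fun h => hii2iii (hi2ii h), hiii2i⟩⟩
end
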